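/- For the Thue–Morse substitution τ : Z/2 → (Z/2)² given by τ(a) = (a, a+1) on H = (Z/2)^(N), the substitutional subshift X_τ has exactly two elements, and the H-action on X_τ factors through the homomorphism σ : H → Z/2 given by σ(h) = Σ_n h(n). -/

import Mathlib

/-!
The Thue–Morse substitution `τ(a) = (a, a+1)` on `H = (ℤ/2)^(ℕ) = ℕ →₀ ZMod 2`:
the substitutional subshift `X_τ` has exactly two elements, namely the
digit-sum function `σ` and its complement `1 + σ` (under the binary
identification of `H` with `ℕ`, these are exactly the Thue–Morse sequence and
its complement), and the `H`-action on `X_τ` factors through the homomorphism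
`σ : H → ℤ/2`, `σ(h) = Σₙ h(n)`.
-/

/-- The element `(f, h₀, h₁, …)` of `H = ℕ →₀ ZMod 2`. -/
noncomputable def cons (f : ZMod 2) (h : ℕ →₀ ZMod 2) : ℕ →₀ ZMod 2 :=
  Finsupp.single 0 f + Finsupp.embDomain ⟨Nat.succ, Nat.succ_injective⟩ h

/-- `τ̃` induced by a substitution `τ : A → 𝒫(A^{ℤ/2})`. -/
noncomputable def tildeTau {A : Type*} (τ : A → Set (ZMod 2 → A))
    (x : (ℕ →₀ ZMod 2) → A) : Set ((ℕ →₀ ZMod 2) → A) :=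
  {y | ∀ h : ℕ →₀ ZMod 2, (fun f : ZMod 2 => y (cons f h)) ∈ τ (x h)}

/-- `X₀ = A^H`, `X_{n+1} = ⋃_{f} f_{@0} · τ̃(Xₙ)`. -/
noncomputable def subLevel {A : Type*} (τ : A → Set (ZMod 2 → A)) :
    ℕ → Set ((ℕ →₀ ZMod 2) → A)
  | 0 => Set.univ
  | n + 1 =>
      {z | ∃ f : ZMod 2, ∃ x ∈ subLevel τ n, ∃ y ∈ tildeTau τ x,
        z = fun h => y (h + Finsupp.single 0 f)}

/-- The substitutional subshift `X_τ = ⋂ₙ Xₙ`. -/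
noncomputable def subShift {A : Type*} (τ : A → Set (ZMod 2 → A)) :
    Set ((ℕ →₀ ZMod 2) → A) :=
  ⋂ n, subLevel τ n

/-- The Thue–Morse substitution `τ(a) = (a, 1 + a)`, i.e. the tuple
`f ↦ a + f` indexed by `f ∈ ℤ/2`. -/
def tmTau : ZMod 2 → Set (ZMod 2 → ZMod 2) := fun a => {fun f => a + f}

/-- `σ(h) = Σₙ h(n)`: under the binary identification of `H` with `ℕ`, this is
the Thue–Morse sequence. -/
noncomputable def digitSum (h : ℕ →₀ ZMod 2) : ZMod 2 := h.sum fun _ v => v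

noncomputable def tail (h : ℕ →₀ ZMod 2) : ℕ →₀ ZMod 2 :=
  Finsupp.comapDomain Nat.succ h (Nat.succ_injective.injOn)

lemma tail_apply (h : ℕ →₀ ZMod 2) (n : ℕ) : tail h n = h (n + 1) := rfl

lemma cons_apply_zero (f : ZMod 2) (h : ℕ →₀ ZMod 2) : cons f h 0 = f := by
  have : (0:ℕ) ∉ Set.range (⟨Nat.succ, Nat.succ_injective⟩ : ℕ ↪ ℕ) := by
    rintro ⟨a, ha⟩; exact Nat.succ_ne_zero a ha
  simp [cons, Finsupp.embDomain_notin_range _ _ _ this]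

lemma cons_apply_succ (f : ZMod 2) (h : ℕ →₀ ZMod 2) (n : ℕ) :
    cons f h (n + 1) = h n := by
  have : Finsupp.embDomain ⟨Nat.succ, Nat.succ_injective⟩ h (n+1)
      = h n := Finsupp.embDomain_apply_self _ h n
  simp [cons, this, Finsupp.single_apply]

lemma cons_tail (h : ℕ →₀ ZMod 2) : cons (h 0) (tail h) = h := by
  ext n
  cases n with
  | zero => exact cons_apply_zero _ _
  | succ n => rw [cons_apply_succ]; rfl

lemma digitSum_add (a b : ℕ →₀ ZMod 2) :
    digitSum (a + b) = digitSum a + digitSum b := by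
  simp [digitSum, Finsupp.sum_add_index']

lemma digitSum_single (n : ℕ) (f : ZMod 2) : digitSum (Finsupp.single n f) = f := by
  simp [digitSum, Finsupp.sum_single_index]

lemma digitSum_zero : digitSum 0 = 0 := by simp [digitSum]

lemma digitSum_cons (f : ZMod 2) (h : ℕ →₀ ZMod 2) :
    digitSum (cons f h) = f + digitSum h := by
  rw [cons, digitSum_add, digitSum_single]
  congr 1
  simp [digitSum, Finsupp.sum_embDomain]

lemma digitSum_tail (h : ℕ →₀ ZMod 2) : digitSum (tail h) = h 0 + digitSum h := by
  have := digitSum_cons (h 0) (tail h)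
  rw [cons_tail] at this
  have h2 : h 0 + h 0 = 0 := by
    have : (2 : ZMod 2) = 0 := by decide
    calc h 0 + h 0 = 2 * h 0 := by ring
    _ = 0 := by rw [this]; ring
  rw [this]
  have : h 0 + (h 0 + digitSum (tail h)) = (h 0 + h 0) + digitSum (tail h) := by ring
  rw [this, h2, zero_add]

lemma tail_support {h : ℕ →₀ ZMod 2} {n : ℕ} (hs : h.support ⊆ Finset.range (n+1)) :
    (tail h).support ⊆ Finset.range n := by
  intro m hm
  have : tail h m ≠ 0 := Finsupp.mem_support_iff.mp hm
  have : h (m+1) ≠ 0 := this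
  have := hs (Finsupp.mem_support_iff.mpr this)
  simp only [Finset.mem_range] at this ⊢
  omega
lemma tmTau_mem {x y : (ℕ →₀ ZMod 2) → ZMod 2} :
    y ∈ tildeTau tmTau x ↔ ∀ h f, y (cons f h) = x h + f := by
  constructor
  · intro hy h f
    have := hy h
    simp only [tmTau, Set.mem_singleton_iff] at this
    exact congrFun this f
  · intro hy h
    simp only [tmTau, Set.mem_singleton_iff]
    funext f; exact hy h f

lemma digitSum_mem_tilde : digitSum ∈ tildeTau tmTau digitSum := by
  rw [tmTau_mem]
  intro h f
  rw [digitSum_cons, add_comm]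

lemma level_eq : ∀ n, ∀ z ∈ subLevel tmTau n, ∀ h : ℕ →₀ ZMod 2,
    h.support ⊆ Finset.range n → z h = z 0 + digitSum h := by
  intro n
  induction n with
  | zero =>
    intro z _ h hs
    have : h = 0 := by
      ext m
      by_contra hc
      have := hs (Finsupp.mem_support_iff.mpr (by simpa using hc))
      simp at this
    subst this
    rw [digitSum_zero, add_zero]
  | succ n ih =>
    rintro z ⟨f, x, hx, y, hy, rfl⟩ h hs
    rw [tmTau_mem] at hy
    simp only
    have key : ∀ g : ℕ →₀ ZMod 2, y g = x (tail g) + g 0 := by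
      intro g
      conv_lhs => rw [← cons_tail g]
      exact hy (tail g) (g 0)
    have e0 : ((0 : ℕ →₀ ZMod 2) + Finsupp.single 0 f) = Finsupp.single 0 f := by
      rw [zero_add]
    rw [key, key]
    have t1 : tail (h + Finsupp.single 0 f) = tail h := by
      ext m; simp [tail_apply, Finsupp.single_apply]
    have t2 : tail ((0 : ℕ →₀ ZMod 2) + Finsupp.single 0 f) = 0 := by
      ext m; simp [tail_apply, Finsupp.single_apply]
    have a1 : (h + Finsupp.single 0 f : ℕ →₀ ZMod 2) 0 = h 0 + f := by simp
    have a2 : ((0 : ℕ →₀ ZMod 2) + Finsupp.single 0 f : ℕ →₀ ZMod 2) 0 = f := by simp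
    rw [t1, t2, a1, a2]
    rw [ih x hx (tail h) (tail_support hs), ih x hx 0 (by simp)]
    rw [digitSum_tail, digitSum_zero]
    have h2 : h 0 + h 0 = 0 := by
      calc h 0 + h 0 = 2 * h 0 := by ring
      _ = 0 := by rw [show (2 : ZMod 2) = 0 from rfl]; ring
    linear_combination h2

lemma shift_digitSum (g : ℕ →₀ ZMod 2) :
    (fun h => digitSum (h + g)) = fun h => digitSum g + digitSum h := by
  funext h; rw [digitSum_add, add_comm]

lemma mem_levels : ∀ n, digitSum ∈ subLevel tmTau n ∧
    (fun h => 1 + digitSum h) ∈ subLevel tmTau n := by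
  intro n
  induction n with
  | zero => exact ⟨trivial, trivial⟩
  | succ n ih =>
    constructor
    · exact ⟨0, digitSum, ih.1, digitSum, digitSum_mem_tilde, by
        funext h; simp [digitSum_add, digitSum_single]⟩
    · exact ⟨1, digitSum, ih.1, digitSum, digitSum_mem_tilde, by
        funext h; rw [digitSum_add, digitSum_single, add_comm]⟩


/-- `X_τ` consists of exactly the two (distinct) elements `σ` and `1 + σ`,
and the `H`-action on `X_τ` factors through `σ : H → ℤ/2`. -/
theorem thueMorse_subshift :
    subShift tmTau = {digitSum, fun h => 1 + digitSum h} ∧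
    digitSum ≠ (fun h => 1 + digitSum h) ∧
    (∀ g₁ g₂ : ℕ →₀ ZMod 2, digitSum g₁ = digitSum g₂ →
      ∀ x ∈ subShift tmTau,
        (fun h => x (h + g₁)) = (fun h => x (h + g₂))) := by
  have sub_char : ∀ z ∈ subShift tmTau, ∀ h, z h = z 0 + digitSum h := by
    intro z hz h
    obtain ⟨n, hn⟩ := Finset.exists_nat_subset_range h.support
    exact level_eq n z (Set.mem_iInter.mp hz n) h hn
  refine ⟨?_, ?_, ?_⟩
  · ext z
    constructor
    · intro hz
      have hc := sub_char z hz
      have h01 : z 0 = 0 ∨ z 0 = 1 := (by decide : ∀ a : ZMod 2, a = 0 ∨ a = 1) (z 0)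
      rcases h01 with h0 | h0
      · left; funext h; rw [hc h, h0, zero_add]
      · right; funext h; rw [hc h, h0]
    · rintro (rfl | rfl) <;> refine Set.mem_iInter.mpr fun n => ?_
      · exact (mem_levels n).1
      · exact (mem_levels n).2
  · intro heq
    have := congrFun heq 0
    rw [digitSum_zero] at this
    simp at this
  · intro g₁ g₂ hg x hx
    have hc := sub_char x hx
    funext h
    rw [hc (h + g₁), hc (h + g₂), digitSum_add, digitSum_add, hg]
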